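/- Let f : ℝ^d → ℝ be ℓ-smooth, θ_{t+1} = θ_t − η ĝ_t with ‖ĝ_t‖ = 1, and suppose ‖ĝ_t − ∇f(θ_t)/‖∇f(θ_t)‖‖ ≤ 1/2 (where ∇f(θ_t) ≠ 0). Then f(θ_{t+1}) − f(θ_t) ≤ −(η/2)‖∇f(θ_t)‖ + (ℓη²)/2. -/

import Mathlib

open MeasureTheory
open scoped RealInnerProductSpace

theorem descent_lemma {d : ℕ} (f : EuclideanSpace ℝ (Fin d) → ℝ) (ℓ : ℝ) (hℓ : 0 ≤ ℓ)
    (hdiff : Differentiable ℝ f)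
    (hlip : ∀ x y, ‖gradient f x - gradient f y‖ ≤ ℓ * ‖x - y‖)
    (θ v : EuclideanSpace ℝ (Fin d)) :
    f (θ + v) ≤ f θ + ⟪gradient f θ, v⟫ + ℓ / 2 * ‖v‖ ^ 2 := by
  have hgradcont : Continuous fun x => gradient f x := by
    have : LipschitzWith ℓ.toNNReal (fun x => gradient f x) :=
      LipschitzWith.of_dist_le_mul (fun x y => by
        rw [dist_eq_norm, dist_eq_norm]
        simpa [Real.coe_toNNReal ℓ hℓ] using hlip x y)
    exact this.continuous
  set φ : ℝ → ℝ := fun t => f (θ + t • v) with hφdef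
  have hc : ∀ t : ℝ, HasDerivAt (fun s : ℝ => θ + s • v) v t := by
    intro t
    simpa using ((hasDerivAt_id t).smul_const v).const_add θ
  have hφ : ∀ t : ℝ, HasDerivAt φ ⟪gradient f (θ + t • v), v⟫ t := by
    intro t
    have hg := (hdiff (θ + t • v)).hasGradientAt
    have hf := hg.hasFDerivAt
    have := hf.comp_hasDerivAt t (hc t)
    simpa [InnerProductSpace.toDual_apply_apply, hφdef, Function.comp_def] using this
  have hcont : Continuous fun t : ℝ => ⟪gradient f (θ + t • v), v⟫ := by
    exact (hgradcont.comp (by continuity)).inner continuous_const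
  have hFTC : f (θ + v) - f θ = ∫ t in (0:ℝ)..1, ⟪gradient f (θ + t • v), v⟫ := by
    have := intervalIntegral.integral_eq_sub_of_hasDerivAt
      (f := φ) (a := (0:ℝ)) (b := 1)
      (fun t _ => hφ t) (hcont.intervalIntegrable 0 1)
    simp only [hφdef] at this
    rw [this]; simp
  have hbound : ∀ t ∈ Set.Icc (0:ℝ) 1,
      ⟪gradient f (θ + t • v), v⟫ ≤ ⟪gradient f θ, v⟫ + ℓ * ‖v‖ ^ 2 * t := by
    intro t ht
    have h1 : ⟪gradient f (θ + t • v), v⟫ - ⟪gradient f θ, v⟫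
        = ⟪gradient f (θ + t • v) - gradient f θ, v⟫ := by
      rw [inner_sub_left]
    have h2 : ⟪gradient f (θ + t • v) - gradient f θ, v⟫
        ≤ ‖gradient f (θ + t • v) - gradient f θ‖ * ‖v‖ :=
      real_inner_le_norm _ _
    have h3 : ‖gradient f (θ + t • v) - gradient f θ‖ ≤ ℓ * (t * ‖v‖) := by
      have := hlip (θ + t • v) θ
      simpa [norm_smul, abs_of_nonneg ht.1, mul_assoc] using this
    nlinarith [norm_nonneg v, norm_nonneg (gradient f (θ + t • v) - gradient f θ)]
  have hint : (∫ t in (0:ℝ)..1, ⟪gradient f (θ + t • v), v⟫)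
      ≤ ∫ t in (0:ℝ)..1, (⟪gradient f θ, v⟫ + ℓ * ‖v‖ ^ 2 * t) := by
    apply intervalIntegral.integral_mono_on (by norm_num)
      (hcont.intervalIntegrable 0 1)
      ((by continuity : Continuous fun t : ℝ => ⟪gradient f θ, v⟫ + ℓ * ‖v‖ ^ 2 * t).intervalIntegrable 0 1)
      hbound
  have hrhs : (∫ t in (0:ℝ)..1, (⟪gradient f θ, v⟫ + ℓ * ‖v‖ ^ 2 * t))
      = ⟪gradient f θ, v⟫ + ℓ / 2 * ‖v‖ ^ 2 := by
    have h2 : IntervalIntegrable (fun t : ℝ => ℓ * ‖v‖ ^ 2 * t) volume 0 1 :=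
      (continuous_const.mul continuous_id).intervalIntegrable 0 1
    rw [intervalIntegral.integral_add intervalIntegrable_const h2,
      intervalIntegral.integral_const, intervalIntegral.integral_const_mul,
      integral_id]
    norm_num; ring
  linarith [hFTC, hint.trans_eq hrhs]


/-- one-step descent.  If `f` is ℓ-smooth, `θ' = θ − η ĝ` with `‖ĝ‖ = 1`
and `‖ĝ − ∇f(θ)/‖∇f(θ)‖‖ ≤ 1/2` (with `∇f(θ) ≠ 0`), then
`f θ' − f θ ≤ −(η/2)‖∇f(θ)‖ + ℓη²/2`. -/
theorem stmt5 {d : ℕ} (f : EuclideanSpace ℝ (Fin d) → ℝ) (ℓ η : ℝ)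
    (hdiff : Differentiable ℝ f)
    (hlip : ∀ x y, ‖gradient f x - gradient f y‖ ≤ ℓ * ‖x - y‖)
    (hη : 0 < η)
    (θ θ' g : EuclideanSpace ℝ (Fin d))
    (hg : ‖g‖ = 1)
    (hgrad : gradient f θ ≠ 0)
    (happrox : ‖g - ‖gradient f θ‖⁻¹ • gradient f θ‖ ≤ 1 / 2)
    (hupd : θ' = θ - η • g) :
    f θ' - f θ ≤ -(η / 2) * ‖gradient f θ‖ + ℓ * η ^ 2 / 2 := by
  have hℓ : 0 ≤ ℓ := by
    have h := hlip θ (θ - g)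
    have : θ - (θ - g) = g := by abel
    rw [this, hg, mul_one] at h
    exact le_trans (norm_nonneg _) h
  set G := gradient f θ with hG
  set n := ‖G‖ with hn
  have hnpos : 0 < n := norm_pos_iff.mpr hgrad
  set u := n⁻¹ • G with hu
  have hunorm : ‖u‖ = 1 := by
    rw [hu, norm_smul, norm_inv, norm_norm, ← hn, inv_mul_cancel₀ hnpos.ne']
  have hinner_ug : (7:ℝ)/8 ≤ ⟪g, u⟫ := by
    have hsq : ‖g - u‖ ^ 2 ≤ (1/2:ℝ) ^ 2 := by
      apply pow_le_pow_left₀ (norm_nonneg _) happrox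
    rw [norm_sub_sq_real, hg, hunorm] at hsq
    nlinarith
  have hGu : G = n • u := by
    rw [hu, smul_smul, mul_inv_cancel₀ hnpos.ne', one_smul]
  have hinner_Gg : n / 2 ≤ ⟪G, g⟫ := by
    rw [hGu, real_inner_smul_left]
    have : ⟪u, g⟫ = ⟪g, u⟫ := real_inner_comm _ _
    rw [this]
    nlinarith
  have hkey := descent_lemma f ℓ hℓ hdiff hlip θ (-(η • g))
  have hθ' : θ' = θ + -(η • g) := by rw [hupd]; abel
  rw [← hθ'] at hkey
  have hinner : ⟪G, -(η • g)⟫ = -(η * ⟪G, g⟫) := by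
    rw [inner_neg_right, real_inner_smul_right]
  have hnorm : ‖-(η • g)‖ = η := by
    rw [norm_neg, norm_smul, hg, mul_one, Real.norm_eq_abs, abs_of_pos hη]
  rw [hinner, hnorm] at hkey
  nlinarith
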